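/- Let H be the additive subgroup 2·Z[X] + ⟨X^n − X^m : n,m both prime or both not prime⟩ of Z[X]. Then H has index at most 4 in (Z[X],+), but the set Z[X]·H = {f·h : f ∈ Z[X], h ∈ H} does not contain any ideal of Z[X] of finite additive index. -/

import Mathlib

open Polynomial Pointwise

namespace Stmt12

/-- The generating set. -/
def S : Set (Polynomial ℤ) :=
  ({p : Polynomial ℤ | ∃ q : Polynomial ℤ, p = 2 * q} ∪
   {p : Polynomial ℤ | ∃ n m : ℕ, (n.Prime ↔ m.Prime) ∧ p = X ^ n - X ^ m})

/-- coefficientwise functional -/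
noncomputable def eFun : ℕ → ℤ →+ ZMod 2 × ZMod 2 := fun i =>
  if i.Prime then (Int.castAddHom (ZMod 2)).prod 0
  else AddMonoidHom.prod 0 (Int.castAddHom (ZMod 2))

/-- (sum of coefficients at prime exponents, sum at non-prime exponents) mod 2 -/
noncomputable def phi : Polynomial ℤ →+ ZMod 2 × ZMod 2 :=
  (Finsupp.liftAddHom eFun).comp (AddMonoidAlgebra.coeffAddEquiv.toAddMonoidHom.comp
    (Polynomial.toFinsuppIso ℤ).toAddEquiv.toAddMonoidHom)

lemma phi_monomial (k : ℕ) (t : ℤ) : phi (Polynomial.monomial k t) = eFun k t := by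
  show (Finsupp.liftAddHom eFun) (AddMonoidAlgebra.coeffAddEquiv
    ((Polynomial.toFinsuppIso ℤ) (Polynomial.monomial k t))) = _
  rw [Polynomial.toFinsuppIso_apply, Polynomial.toFinsupp_monomial]
  exact Finsupp.liftAddHom_apply_single _ _ _

lemma phi_X_pow (k : ℕ) : phi (X ^ k) = eFun k 1 := by
  rw [X_pow_eq_monomial, phi_monomial]

lemma phi_C (t : ℤ) : phi (C t) = (0, (t : ZMod 2)) := by
  rw [← Polynomial.monomial_zero_left, phi_monomial]
  simp [eFun, Nat.not_prime_zero]

lemma phi_C_mul_X_pow (t : ℤ) (k : ℕ) : phi (C t * X ^ k) = eFun k t := by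
  rw [C_mul_X_pow_eq_monomial, phi_monomial]

lemma eFun_prime {k : ℕ} (hk : k.Prime) (t : ℤ) : eFun k t = ((t : ZMod 2), 0) := by
  simp [eFun, hk]

lemma eFun_not_prime {k : ℕ} (hk : ¬ k.Prime) (t : ℤ) : eFun k t = (0, (t : ZMod 2)) := by
  simp [eFun, hk]

lemma hH_phi : AddSubgroup.closure S ≤ phi.ker := by
  rw [AddSubgroup.closure_le]
  rintro p (⟨q, rfl⟩ | ⟨n, m, hnm, rfl⟩)
  · have : (2 : Polynomial ℤ) * q = q + q := by ring
    simp only [AddMonoidHom.mem_ker, SetLike.mem_coe, this, map_add]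
    change phi q + phi q = 0
    exact CharTwo.add_self_eq_zero _
  · simp only [AddMonoidHom.mem_ker, SetLike.mem_coe, map_sub]
    rw [phi_X_pow, phi_X_pow]
    by_cases hn : n.Prime
    · rw [eFun_prime hn, eFun_prime (hnm.mp hn), sub_self]
    · rw [eFun_not_prime hn, eFun_not_prime (fun h => hn (hnm.mpr h)), sub_self]

/-- evaluation at 1 mod 2 -/
noncomputable def psi : Polynomial ℤ →+* ZMod 2 :=
  (Int.castRingHom (ZMod 2)).comp (Polynomial.evalRingHom (1 : ℤ))

lemma hH_psi : AddSubgroup.closure S ≤ psi.toAddMonoidHom.ker := by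
  rw [AddSubgroup.closure_le]
  rintro p (⟨q, rfl⟩ | ⟨n, m, hnm, rfl⟩)
  · have h2 : psi (2 * q) = 0 := by
      rw [map_mul]
      have h0 : psi 2 = 0 := by
        have : ((2 : ℤ) : ZMod 2) = 0 := by decide
        simpa [psi] using this
      rw [h0, zero_mul]
    simpa [AddMonoidHom.mem_ker] using h2
  · have h2 : psi (X ^ n - X ^ m) = 0 := by simp [psi]
    simpa [AddMonoidHom.mem_ker] using h2


lemma zmod2_val_nat (a : ZMod 2) : ((a.val : ℕ) : ZMod 2) = a := ZMod.natCast_zmod_val a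

lemma int_parity (t : ℤ) : (2 : ℤ) ∣ (t - (((t : ZMod 2)).val : ℤ)) := by
  apply (ZMod.intCast_zmod_eq_zero_iff_dvd _ 2).mp
  rw [Int.cast_sub, Int.cast_natCast, zmod2_val_nat, sub_self]

lemma val_add_parity (a b : ZMod 2) :
    (2 : ℤ) ∣ ((a.val : ℤ) + (b.val : ℤ) - (((a + b).val : ℤ))) := by
  apply (ZMod.intCast_zmod_eq_zero_iff_dvd _ 2).mp
  rw [Int.cast_sub, Int.cast_add, Int.cast_natCast, Int.cast_natCast, Int.cast_natCast,
    zmod2_val_nat, zmod2_val_nat, zmod2_val_nat, sub_self]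

lemma claim (f : Polynomial ℤ) :
    ∃ a b : ZMod 2, f - (C ((a.val : ℤ)) * X ^ 2 + C ((b.val : ℤ))) ∈ AddSubgroup.closure S := by
  induction f using Polynomial.induction_on' with
  | add p q hp hq =>
    obtain ⟨a1, b1, h1⟩ := hp
    obtain ⟨a2, b2, h2⟩ := hq
    refine ⟨a1 + a2, b1 + b2, ?_⟩
    obtain ⟨k1, hk1⟩ := val_add_parity a1 a2
    obtain ⟨k2, hk2⟩ := val_add_parity b1 b2
    have hmem : (2 * (C k1 * X ^ 2 + C k2) : Polynomial ℤ) ∈ AddSubgroup.closure S :=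
      AddSubgroup.subset_closure (Or.inl ⟨_, rfl⟩)
    have key := AddSubgroup.add_mem _ (AddSubgroup.add_mem _ h1 h2) hmem
    convert key using 1
    have e1 : (C (((a1+a2).val : ℤ)) : Polynomial ℤ)
        = C ((a1.val : ℤ)) + C ((a2.val : ℤ)) - C (2*k1) := by
      rw [← map_add, ← map_sub]; congr 1; linarith [hk1]
    have e2 : (C (((b1+b2).val : ℤ)) : Polynomial ℤ)
        = C ((b1.val : ℤ)) + C ((b2.val : ℤ)) - C (2*k2) := by
      rw [← map_add, ← map_sub]; congr 1; linarith [hk2]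
    rw [e1, e2]
    simp only [map_mul, map_ofNat, map_add]
    ring
  | monomial n t =>
    by_cases hn : n.Prime
    · refine ⟨(t : ZMod 2), 0, ?_⟩
      obtain ⟨k, hk⟩ := int_parity t
      have h0 : ((X : Polynomial ℤ) ^ n - X ^ 2) ∈ AddSubgroup.closure S :=
        AddSubgroup.subset_closure
          (Or.inr ⟨n, 2, ⟨fun _ => Nat.prime_two, fun _ => hn⟩, rfl⟩)
      have h1 : (t • ((X : Polynomial ℤ) ^ n - X ^ 2)) ∈ AddSubgroup.closure S :=
        zsmul_mem h0 t
      have h2 : (2 * (C k * X ^ 2) : Polynomial ℤ) ∈ AddSubgroup.closure S :=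
        AddSubgroup.subset_closure (Or.inl ⟨_, rfl⟩)
      have key := AddSubgroup.add_mem _ h1 h2
      convert key using 1
      have ht : (C (((t : ZMod 2).val : ℤ)) : Polynomial ℤ) = C t - C (2*k) := by
        rw [← map_sub]; congr 1; linarith [hk]
      rw [ht, ← C_mul_X_pow_eq_monomial, zsmul_eq_mul]
      rw [show ((t : Polynomial ℤ)) = C t from (Polynomial.C_eq_intCast t).symm]
      simp only [ZMod.val_zero, Int.cast_zero, Nat.cast_zero, map_zero, map_mul, map_ofNat, map_sub, map_add]
      ring
    · refine ⟨0, (t : ZMod 2), ?_⟩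
      obtain ⟨k, hk⟩ := int_parity t
      have h0 : ((X : Polynomial ℤ) ^ n - X ^ 0) ∈ AddSubgroup.closure S :=
        AddSubgroup.subset_closure
          (Or.inr ⟨n, 0, ⟨fun h => absurd h hn, fun h => absurd h Nat.not_prime_zero⟩, rfl⟩)
      have h1 : (t • ((X : Polynomial ℤ) ^ n - X ^ 0)) ∈ AddSubgroup.closure S :=
        zsmul_mem h0 t
      have h2 : (2 * (C k) : Polynomial ℤ) ∈ AddSubgroup.closure S :=
        AddSubgroup.subset_closure (Or.inl ⟨_, rfl⟩)
      have key := AddSubgroup.add_mem _ h1 h2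
      convert key using 1
      have ht : (C (((t : ZMod 2).val : ℤ)) : Polynomial ℤ) = C t - C (2*k) := by
        rw [← map_sub]; congr 1; linarith [hk]
      rw [ht, ← C_mul_X_pow_eq_monomial, zsmul_eq_mul]
      rw [show ((t : Polynomial ℤ)) = C t from (Polynomial.C_eq_intCast t).symm]
      simp only [ZMod.val_zero, Int.cast_zero, Nat.cast_zero, map_zero, map_mul, map_ofNat, map_sub, map_add]
      ring

lemma surj_rep : Function.Surjective (fun p : ZMod 2 × ZMod 2 =>
    QuotientAddGroup.mk' (AddSubgroup.closure S)
      (C ((p.1.val : ℤ)) * X ^ 2 + C ((p.2.val : ℤ)))) := by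
  intro x
  induction x using QuotientAddGroup.induction_on with
  | H f =>
    obtain ⟨a, b, hab⟩ := claim f
    refine ⟨(a, b), ?_⟩
    show QuotientAddGroup.mk' (AddSubgroup.closure S)
      (C ((a.val : ℤ)) * X ^ 2 + C ((b.val : ℤ))) = ↑f
    rw [QuotientAddGroup.mk'_apply, QuotientAddGroup.eq, neg_add_eq_sub]
    exact hab

lemma index_ne_zero : (AddSubgroup.closure S).index ≠ 0 := by
  haveI : Finite (Polynomial ℤ ⧸ AddSubgroup.closure S) := Finite.of_surjective _ surj_rep
  exact Nat.card_ne_zero.mpr ⟨inferInstance, inferInstance⟩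

lemma index_le_four : (AddSubgroup.closure S).index ≤ 4 := by
  haveI : Finite (Polynomial ℤ ⧸ AddSubgroup.closure S) := Finite.of_surjective _ surj_rep
  have h := Nat.card_le_card_of_surjective _ surj_rep
  have : Nat.card (ZMod 2 × ZMod 2) = 4 := by
    simp [Nat.card_eq_fintype_card]
  rw [AddSubgroup.index]
  omega

lemma prime_step (e s : ℕ) (hs : 1 ≤ s) :
    ∃ m, e ≤ m ∧ m.Prime ∧ ¬ (m + s).Prime := by
  obtain ⟨p, hpe, hp⟩ := Nat.exists_infinite_primes e
  have hex : ∃ k, ¬ (p + k * s).Prime := by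
    refine ⟨p, ?_⟩
    rw [show p + p * s = p * (1 + s) by ring]
    intro hpr
    rcases Nat.prime_mul_iff.mp hpr with ⟨-, h1⟩ | ⟨-, h1⟩
    · omega
    · have := hp.two_le; omega
  classical
  set k := Nat.find hex with hkdef
  have hk_spec : ¬ (p + k * s).Prime := Nat.find_spec hex
  have hk1 : 1 ≤ k := by
    rcases Nat.eq_zero_or_pos k with h0 | h
    · exfalso; apply hk_spec; rw [h0]; simpa using hp
    · exact h
  have hprev : (p + (k - 1) * s).Prime :=
    not_not.mp (Nat.find_min hex (show k - 1 < k by omega))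
  refine ⟨p + (k - 1) * s, by omega, hprev, ?_⟩
  have hks : (k - 1) * s + s = k * s := by
    calc (k - 1) * s + s = (k - 1 + 1) * s := by ring
      _ = k * s := by rw [show k - 1 + 1 = k by omega]
  rw [add_assoc, hks]
  exact hk_spec

lemma part3 :
    ¬ ∃ I : Ideal (Polynomial ℤ), I.toAddSubgroup.index ≠ 0 ∧
        (I : Set (Polynomial ℤ)) ⊆
          Set.univ * ((AddSubgroup.closure S : AddSubgroup (Polynomial ℤ)) :
            Set (Polynomial ℤ)) := by
  rintro ⟨I, hind, hsub⟩
  set M := I.toAddSubgroup.index with hMdef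
  have hMpos : 0 < M := Nat.pos_of_ne_zero hind
  have hMg : ∀ g : Polynomial ℤ, (M : Polynomial ℤ) * g ∈ I := by
    intro g
    have h := AddSubgroup.nsmul_index_mem I.toAddSubgroup g
    rw [nsmul_eq_mul] at h
    exact (Submodule.mem_toAddSubgroup _).mp h
  -- M is even
  have hM2 : ((M : ℕ) : ZMod 2) = 0 := by
    have hmem : ((M : Polynomial ℤ)) ∈ (I : Set (Polynomial ℤ)) := by
      simpa using hMg 1
    obtain ⟨f, -, h, hh, hfh⟩ := Set.mem_mul.mp (hsub hmem)
    have h1 : psi h = 0 := by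
      have := hH_psi hh
      simpa [AddMonoidHom.mem_ker] using this
    have h2 : psi ((M : Polynomial ℤ)) = 0 := by rw [← hfh, map_mul, h1, mul_zero]
    simpa [psi] using h2
  -- pigeonhole for powers of X
  haveI : Finite (Polynomial ℤ ⧸ I.toAddSubgroup) := (Nat.card_ne_zero.mp hind).2
  obtain ⟨n1, n2, hne, heq⟩ := Finite.exists_ne_map_eq_of_infinite
    (fun n : ℕ => QuotientAddGroup.mk' I.toAddSubgroup ((X : Polynomial ℤ) ^ n))
  have hpair : ∃ e s : ℕ, 1 ≤ s ∧ (X : Polynomial ℤ) ^ (e + s) - X ^ e ∈ I := by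
    have key : ∀ a b : ℕ, a < b →
        QuotientAddGroup.mk' I.toAddSubgroup ((X : Polynomial ℤ) ^ a) =
          QuotientAddGroup.mk' I.toAddSubgroup ((X : Polynomial ℤ) ^ b) →
        ∃ e s : ℕ, 1 ≤ s ∧ (X : Polynomial ℤ) ^ (e + s) - X ^ e ∈ I := by
      intro a b hab habq
      refine ⟨a, b - a, by omega, ?_⟩
      obtain ⟨z, hz, hz2⟩ := (QuotientAddGroup.mk'_eq_mk' _).mp habq
      have hzz : z = X ^ b - X ^ a := by rw [← hz2]; ring
      rw [hzz] at hz
      rw [show a + (b - a) = b by omega]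
      exact (Submodule.mem_toAddSubgroup _).mp hz
    rcases lt_or_gt_of_ne hne with h | h
    · exact key n1 n2 h heq
    · exact key n2 n1 h heq.symm
  obtain ⟨e, s, hs1, hXs⟩ := hpair
  have hpow : ∀ m, e ≤ m → (X : Polynomial ℤ) ^ (m + s) - X ^ m ∈ I := by
    intro m hm
    have h := I.mul_mem_left ((X : Polynomial ℤ) ^ (m - e)) hXs
    have heq2 : (X : Polynomial ℤ) ^ (m - e) * (X ^ (e + s) - X ^ e)
        = X ^ (m + s) - X ^ m := by
      rw [mul_sub, ← pow_add, ← pow_add,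
        show m - e + (e + s) = m + s by omega, show m - e + e = m by omega]
    rwa [heq2] at h
  obtain ⟨m, hme, hmp, hmsp⟩ := prime_step e s hs1
  -- a prime q bigger than M
  obtain ⟨q, hqM, hq⟩ := Nat.exists_infinite_primes (M + 1)
  haveI : NeZero (q ^ 2) := ⟨pow_ne_zero 2 hq.pos.ne'⟩
  have hcop : Nat.Coprime M (q ^ 2) := by
    apply Nat.Coprime.pow_right
    rw [Nat.coprime_comm]
    exact hq.coprime_iff_not_dvd.mpr
      (fun hdvd => by have := Nat.le_of_dvd hMpos hdvd; omega)
  set u : ZMod (q ^ 2) := ((M : ZMod (q ^ 2)))⁻¹ with hu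
  have hMu : ((M : ℕ) : ZMod (q ^ 2)) * u = 1 := ZMod.coe_mul_inv_eq_one M hcop
  set c : ℤ := (u.val : ℤ) with hcdef
  set d : ℤ := (((q : ZMod (q ^ 2)) * u).val : ℤ) with hddef
  set t1 : ℤ := (M : ℤ) * c - 1 with ht1
  set t0 : ℤ := (M : ℤ) * d with ht0
  have hqc : ((q : ℤ)) ^ 2 ∣ t1 := by
    have h0 : ((t1 : ℤ) : ZMod (q ^ 2)) = 0 := by
      rw [ht1, hcdef]
      push_cast
      rw [ZMod.natCast_zmod_val, hMu, sub_self]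
    have h1 := (ZMod.intCast_zmod_eq_zero_iff_dvd _ (q ^ 2)).mp h0
    exact_mod_cast h1
  have hqd : ((q : ℤ)) ^ 2 ∣ (t0 - (q : ℤ)) := by
    have h0 : ((t0 - (q : ℤ) : ℤ) : ZMod (q ^ 2)) = 0 := by
      rw [ht0, hddef]
      push_cast
      rw [ZMod.natCast_zmod_val,
        show ((M : ℕ) : ZMod (q ^ 2)) * (((q : ℕ) : ZMod (q ^ 2)) * u)
          = ((q : ℕ) : ZMod (q ^ 2)) * (((M : ℕ) : ZMod (q ^ 2)) * u) by ring,
        hMu, mul_one, sub_self]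
    have h1 := (ZMod.intCast_zmod_eq_zero_iff_dvd _ (q ^ 2)).mp h0
    exact_mod_cast h1
  set n := m + s with hndef
  have hmn : m < n := by omega
  have hm2 : 2 ≤ m := hmp.two_le
  set a : Polynomial ℤ := X ^ n + (C t1 * X ^ m + C t0) with ha
  -- a belongs to I
  have haI : a ∈ I := by
    have h1 : (X : Polynomial ℤ) ^ n - X ^ m ∈ I := hpow m hme
    have h2 : ((M : Polynomial ℤ)) * (C c * X ^ m + C d) ∈ I := hMg _
    have hrw : a = ((X : Polynomial ℤ) ^ n - X ^ m)
        + ((M : Polynomial ℤ)) * (C c * X ^ m + C d) := by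
      rw [ha, ht1, ht0, show ((M : ℕ) : Polynomial ℤ) = C ((M : ℤ)) from by push_cast; rfl]
      simp only [map_sub, map_mul, map_one, map_add]
      ring
    rw [hrw]; exact I.add_mem h1 h2
  have hcoeff : ∀ k : ℕ, a.coeff k
      = (if k = n then 1 else 0) + ((if k = m then t1 else 0) + (if k = 0 then t0 else 0)) := by
    intro k
    rw [ha]
    simp only [coeff_add, coeff_C_mul, coeff_X_pow, coeff_C, mul_ite, mul_one, mul_zero]
  -- monicity and degree
  have hdegtail : (C t1 * X ^ m + C t0).degree < (n : WithBot ℕ) := by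
    apply lt_of_le_of_lt (degree_add_le _ _)
    rw [max_lt_iff]
    constructor
    · exact lt_of_le_of_lt (degree_C_mul_X_pow_le m t1) (by exact_mod_cast hmn)
    · exact lt_of_le_of_lt degree_C_le (by exact_mod_cast (show 0 < n by omega))
  have hmonic : a.Monic := by rw [ha]; exact monic_X_pow_add hdegtail
  have hdeg : a.natDegree = n := by
    have hd : a.degree = (n : WithBot ℕ) := by
      rw [ha]
      rw [degree_add_eq_left_of_degree_lt (by rw [degree_X_pow]; exact hdegtail)]
      exact degree_X_pow n
    exact natDegree_eq_of_degree_eq_some hd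
  -- Eisenstein at q
  set P : Ideal ℤ := Ideal.span {((q : ℕ) : ℤ)} with hP
  have hprime_int : Prime ((q : ℕ) : ℤ) := Nat.prime_iff_prime_int.mp hq
  have hPprime : P.IsPrime :=
    (Ideal.span_singleton_prime (by exact_mod_cast hq.pos.ne')).mpr hprime_int
  have hqq : ((q : ℤ)) ∣ (q : ℤ) ^ 2 := dvd_pow_self _ (by norm_num)
  have hqdvd_t1 : ((q : ℕ) : ℤ) ∣ t1 := dvd_trans hqq hqc
  have hqdvd_t0 : ((q : ℕ) : ℤ) ∣ t0 := by
    have h1 : ((q : ℕ) : ℤ) ∣ (t0 - (q : ℤ)) := dvd_trans hqq hqd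
    have := dvd_add h1 (dvd_refl ((q : ℕ) : ℤ))
    simpa using this
  have heis : a.IsEisensteinAt P := by
    refine ⟨?_, ?_, ?_⟩
    · rw [hmonic.leadingCoeff]
      intro hmem1
      exact hPprime.ne_top (Ideal.eq_top_iff_one _ |>.mpr hmem1)
    · intro k hk
      rw [hdeg] at hk
      rw [hcoeff k, if_neg (by omega), zero_add]
      apply Ideal.add_mem
      · split
        · exact Ideal.mem_span_singleton.mpr hqdvd_t1
        · exact P.zero_mem
      · split
        · exact Ideal.mem_span_singleton.mpr hqdvd_t0
        · exact P.zero_mem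
    · rw [hcoeff 0, if_neg (by omega), if_neg (by omega), if_pos rfl, zero_add, zero_add]
      rw [hP, Ideal.span_singleton_pow, Ideal.mem_span_singleton]
      intro hdvd
      have hq2dvd : ((q : ℤ)) ^ 2 ∣ (q : ℤ) := by
        have h2 := dvd_sub hdvd hqd
        simpa using h2
      have hle := Int.le_of_dvd (by exact_mod_cast hq.pos) hq2dvd
      have hge : (2 : ℤ) ≤ (q : ℤ) := by exact_mod_cast hq.two_le
      nlinarith
  have hirr : Irreducible a :=
    heis.irreducible hPprime hmonic.isPrimitive (by rw [hdeg]; omega)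
  -- the factorization from the hypothesis
  obtain ⟨f, -, h, hh, hfh⟩ := Set.mem_mul.mp (hsub haI)
  have hphih : phi h = 0 := by
    have := hH_phi hh
    simpa [AddMonoidHom.mem_ker] using this
  have ht1_2 : ((t1 : ℤ) : ZMod 2) = 1 := by
    rw [ht1]
    push_cast
    rw [hM2, zero_mul, zero_sub]
    decide
  have ht0_2 : ((t0 : ℤ) : ZMod 2) = 0 := by
    rw [ht0]
    push_cast
    rw [hM2, zero_mul]
  have hphia : (phi a).1 = 1 := by
    rw [ha, map_add, map_add, phi_X_pow, phi_C_mul_X_pow, phi_C]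
    rw [eFun_not_prime hmsp, eFun_prime hmp]
    simp [ht1_2]
  rcases hirr.isUnit_or_isUnit hfh.symm with hfu | hhu
  · obtain ⟨r, hr, hfr⟩ := Polynomial.isUnit_iff.mp hfu
    have hphia0 : phi a = 0 := by
      rcases Int.isUnit_iff.mp hr with rfl | rfl
      · have hha : h = a := by rw [← hfh, ← hfr]; simp
        rw [← hha]; exact hphih
      · have hha : h = -a := by
          rw [← hfh, ← hfr]
          simp
        have := hphih
        rw [hha, map_neg, neg_eq_zero] at this
        exact this
    rw [hphia0] at hphia
    exact absurd hphia (by decide)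
  · obtain ⟨r, hr, hrr⟩ := Polynomial.isUnit_iff.mp hhu
    have h2 : (phi h).2 = ((r : ℤ) : ZMod 2) := by rw [← hrr, phi_C]
    rw [hphih] at h2
    rcases Int.isUnit_iff.mp hr with rfl | rfl
    · revert h2; decide
    · revert h2; decide

end Stmt12

/-- The additive subgroup H = 2·Z[X] + ⟨X^n − X^m : n,m both prime or both not prime⟩
has finite index at most 4 in (Z[X],+), but Z[X]·H contains no ideal of Z[X] of
finite additive index. -/
theorem stmt_12 :
    let H : AddSubgroup (Polynomial ℤ) :=
      AddSubgroup.closure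
        ({p : Polynomial ℤ | ∃ q : Polynomial ℤ, p = 2 * q} ∪
         {p : Polynomial ℤ | ∃ n m : ℕ, (n.Prime ↔ m.Prime) ∧ p = X ^ n - X ^ m})
    H.index ≠ 0 ∧ H.index ≤ 4 ∧
    ¬ ∃ I : Ideal (Polynomial ℤ), I.toAddSubgroup.index ≠ 0 ∧
        (I : Set (Polynomial ℤ)) ⊆ Set.univ * (H : Set (Polynomial ℤ)) := by
  intro H
  exact ⟨Stmt12.index_ne_zero, Stmt12.index_le_four, Stmt12.part3⟩
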